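/- Let X be a k-dimensional linear subspace of ℝ^m and let r be a positive integer. Then the linear span in ℝ^m of the set { x^{∘r} : x ∈ X }, where x^{∘r} denotes the coordinatewise r-th power of x, has dimension at most the binomial coefficient C(k + r − 1, r). -/

import Mathlib

/-- Let `X` be a `k`-dimensional subspace of `ℝ^m` and let `r` be a positive
integer.  Then the linear span in `ℝ^m` of the set `{x^{∘r} : x ∈ X}` of
coordinatewise `r`-th powers of elements of `X` has dimension at most the
binomial coefficient `C(k + r - 1, r)`. -/
theorem span_coordinatewise_powers_dim_le (m k r : ℕ) (hr : 0 < r)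
    (X : Submodule ℝ (Fin m → ℝ)) (hX : Module.finrank ℝ X = k) :
    Module.finrank ℝ
      (Submodule.span ℝ
        {y : Fin m → ℝ | ∃ x ∈ X, y = fun i => x i ^ r}) ≤
      (k + r - 1).choose r := by
  classical
  obtain b := Module.finBasisOfFinrankEq ℝ X hX
  -- the monomial vectors indexed by multisets of size r over Fin k
  set T : Sym (Fin k) r → (Fin m → ℝ) :=
    fun s => fun i => (s.val.map (fun j => (b j : Fin m → ℝ) i)).prod with hT
  have hspan : Submodule.span ℝ {y : Fin m → ℝ | ∃ x ∈ X, y = fun i => x i ^ r}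
      ≤ Submodule.span ℝ (Set.range T) := by
    rw [Submodule.span_le]
    rintro y ⟨x, hx, rfl⟩
    have hrep : (⟨x, hx⟩ : X) = ∑ j, b.repr ⟨x, hx⟩ j • b j :=
      (b.sum_repr ⟨x, hx⟩).symm
    set c : Fin k → ℝ := fun j => b.repr ⟨x, hx⟩ j with hc
    have hx' : x = ∑ j, c j • (b j : Fin m → ℝ) := by
      have := congrArg (Subtype.val) hrep
      simp only [Submodule.coe_sum, Submodule.coe_smul] at this
      exact this
    have key : (fun i => x i ^ r) =
        ∑ s ∈ Finset.univ.sym r,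
          ((s.val.countPerms : ℝ) * (s.val.map c).prod) • T s := by
      funext i
      have hxi : x i = ∑ j, c j * (b j : Fin m → ℝ) i := by
        rw [hx']; simp [Finset.sum_apply]
      rw [hxi, Finset.sum_pow]
      rw [Finset.sum_apply]
      refine Finset.sum_congr rfl fun s _ => ?_
      have : (s.val.map fun j => c j * (b j : Fin m → ℝ) i).prod
          = (s.val.map c).prod * (s.val.map fun j => (b j : Fin m → ℝ) i).prod := by
        rw [← Multiset.prod_map_mul]
      simp only [Pi.smul_apply, smul_eq_mul, this, hT]
      ring
    rw [key]
    exact Submodule.sum_mem _ fun s _ =>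
      Submodule.smul_mem _ _ (Submodule.subset_span (Set.mem_range_self s))
  calc Module.finrank ℝ (Submodule.span ℝ {y : Fin m → ℝ | ∃ x ∈ X, y = fun i => x i ^ r})
      ≤ Module.finrank ℝ (Submodule.span ℝ (Set.range T)) :=
        Submodule.finrank_mono hspan
    _ ≤ (Set.range T).toFinset.card := finrank_span_le_card _
    _ ≤ Fintype.card (Sym (Fin k) r) := by
        rw [Set.toFinset_card]; exact Fintype.card_range_le T
    _ = (k + r - 1).choose r := by
        rw [Sym.card_sym_eq_choose, Fintype.card_fin]
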